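/- In the Schläfli incidence structure on 27 lines, the maximum size of a set of pairwise non-intersecting lines is 6: the set {a₁,…,a₆} is pairwise disjoint, and no set of 7 lines among the 27 is pairwise disjoint. -/

import Mathlib

/-- The 27 lines on a smooth cubic surface, labelled à la Schläfli:
six lines `a i`, six lines `b i`, and fifteen lines `c {i,j}` for i < j. -/
inductive L27 where
  | a : Fin 6 → L27
  | b : Fin 6 → L27
  | c : {p : Fin 6 × Fin 6 // p.1 < p.2} → L27
  deriving DecidableEq

/-- The Schläfli incidence relation on the 27 lines. -/
def meets : L27 → L27 → Prop
  | L27.a _, L27.a _ => False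
  | L27.a i, L27.b j => i ≠ j
  | L27.a i, L27.c p => i = p.1.1 ∨ i = p.1.2
  | L27.b i, L27.a j => i ≠ j
  | L27.b _, L27.b _ => False
  | L27.b i, L27.c p => i = p.1.1 ∨ i = p.1.2
  | L27.c p, L27.a j => j = p.1.1 ∨ j = p.1.2
  | L27.c p, L27.b j => j = p.1.1 ∨ j = p.1.2
  | L27.c p, L27.c q => p.1.1 ≠ q.1.1 ∧ p.1.1 ≠ q.1.2 ∧ p.1.2 ≠ q.1.1 ∧ p.1.2 ≠ q.1.2


section Schlafli

abbrev P6 := {p : Fin 6 × Fin 6 // p.1 < p.2}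

/-- `x` is one of the two indices of the pair `p`. -/
abbrev pmem (x : Fin 6) (p : P6) : Prop := x = p.1.1 ∨ x = p.1.2

/-- the two pairs share an index. -/
abbrev inter (p q : P6) : Prop :=
  p.1.1 = q.1.1 ∨ p.1.1 = q.1.2 ∨ p.1.2 = q.1.1 ∨ p.1.2 = q.1.2

/-- the index of `p` other than `x`. -/
def pother (x : Fin 6) (p : P6) : Fin 6 := if p.1.1 = x then p.1.2 else p.1.1

lemma Dshare : ∀ p q : P6, inter p q → ∃ x : Fin 6, pmem x p ∧ pmem x q := by decide

lemma Dsymm : ∀ p q : P6, inter p q → inter q p := by decide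

lemma Luniq : ∀ (x y : Fin 6) (p q : P6), p ≠ q →
    pmem x p → pmem x q → pmem y p → pmem y q → x = y := by decide

lemma Dfull : ∀ (a b : Fin 6) (r : P6), a ≠ b → pmem a r → pmem b r →
    ∀ y : Fin 6, pmem y r → y = a ∨ y = b := by decide

lemma Lsamepair : ∀ (x a : Fin 6) (s p : P6), x ≠ a →
    pmem x s → pmem a s → pmem x p → pmem a p → s = p := by decide

lemma Lother : ∀ (x : Fin 6) (p : P6), pmem x p →
    pother x p ≠ x ∧ pmem (pother x p) p := by decide

lemma Lother_inj : ∀ (x : Fin 6) (p q : P6), pmem x p → pmem x q →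
    pother x p = pother x q → p = q := by decide

lemma Lsmall : ∀ p q : P6, (q.1.1 = p.1.1 ∨ q.1.1 = p.1.2) →
    (q.1.2 = p.1.1 ∨ q.1.2 = p.1.2) → q = p := by decide

lemma Lne : ∀ p : P6, p.1.1 ≠ p.1.2 := by decide

/-- Four distinct pairwise-intersecting pairs have a common index. -/
lemma L4 (p q r s : P6) (hpq : p ≠ q) (hpr : p ≠ r) (hps : p ≠ s) (hqr : q ≠ r)
    (hqs : q ≠ s) (hrs : r ≠ s)
    (ipq : inter p q) (ipr : inter p r) (ips : inter p s) (iqr : inter q r)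
    (iqs : inter q s) (irs : inter r s) :
    ∃ x : Fin 6, pmem x p ∧ pmem x q ∧ pmem x r ∧ pmem x s := by
  obtain ⟨x, hxp, hxq⟩ := Dshare p q ipq
  have key : ∀ r' s' : P6, r' ≠ s' → p ≠ r' → q ≠ r' → p ≠ s' → q ≠ s' →
      inter p r' → inter q r' → inter p s' → inter q s' → inter r' s' → pmem x r' := by
    intro r' s' hr's' hpr' hqr' hps' hqs' ipr' iqr' ips' iqs' ir's'
    by_contra hxr
    obtain ⟨a, hap, har⟩ := Dshare p r' ipr'
    obtain ⟨b, hbq, hbr⟩ := Dshare q r' iqr'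
    have hax : a ≠ x := fun h => hxr (h ▸ har)
    have hbx : b ≠ x := fun h => hxr (h ▸ hbr)
    have hab : a ≠ b := by
      intro h
      exact hax (Luniq a x p q hpq hap (h ▸ hbq) hxp hxq)
    obtain ⟨c, hcp, hcs⟩ := Dshare p s' ips'
    obtain ⟨d, hdq, hds⟩ := Dshare q s' iqs'
    obtain ⟨e, her, hes⟩ := Dshare r' s' ir's'
    rcases Dfull x a p (Ne.symm hax) hxp hap c hcp with rfl | rfl
    · -- x ∈ s'
      rcases Dfull a b r' hab har hbr e her with rfl | rfl
      · exact hps' (Lsamepair c e p s' (Ne.symm hax) hxp hap hcs hes)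
      · exact hqs' (Lsamepair c e q s' (Ne.symm hbx) hxq hbq hcs hes)
    · -- a ∈ s'
      rcases Dfull x b q (Ne.symm hbx) hxq hbq d hdq with rfl | rfl
      · exact hps' (Lsamepair d c p s' (Ne.symm hax) hxp hap hds hcs)
      · exact hr's' (Lsamepair c d r' s' hab har hbr hcs hds)
  have hxr := key r s hrs hpr hqr hps hqs ipr iqr ips iqs irs
  have hxs := key s r (Ne.symm hrs) hps hqs hpr hqr ips iqs ipr iqr (Dsymm r s irs)
  exact ⟨x, hxp, hxq, hxr, hxs⟩

/-- A pairwise-intersecting family of pairs with indices in `U` has at most 3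
elements, or at most `U.card - 1` elements (the star bound). -/
lemma KC (U : Finset (Fin 6)) (C : Finset P6)
    (hU : ∀ p ∈ C, p.1.1 ∈ U ∧ p.1.2 ∈ U)
    (hCC : ∀ p ∈ C, ∀ q ∈ C, p ≠ q → inter p q) :
    C.card ≤ 3 ∨ C.card ≤ U.card - 1 := by
  by_cases h3 : C.card ≤ 3
  · exact Or.inl h3
  right
  have h4 : 4 ≤ C.card := by omega
  obtain ⟨p, hp⟩ : C.Nonempty := Finset.card_pos.mp (by omega)
  obtain ⟨q, hq'⟩ : (C.erase p).Nonempty := Finset.card_pos.mp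
    (by rw [Finset.card_erase_of_mem hp]; omega)
  have hq : q ∈ C := Finset.mem_of_mem_erase hq'
  obtain ⟨r, hr'⟩ : ((C.erase p).erase q).Nonempty := Finset.card_pos.mp
    (by rw [Finset.card_erase_of_mem hq', Finset.card_erase_of_mem hp]; omega)
  have hr : r ∈ C := Finset.mem_of_mem_erase (Finset.mem_of_mem_erase hr')
  obtain ⟨s, hs'⟩ : (((C.erase p).erase q).erase r).Nonempty := Finset.card_pos.mp
    (by rw [Finset.card_erase_of_mem hr', Finset.card_erase_of_mem hq',
        Finset.card_erase_of_mem hp]; omega)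
  have hs : s ∈ C :=
    Finset.mem_of_mem_erase (Finset.mem_of_mem_erase (Finset.mem_of_mem_erase hs'))
  have hqp : q ≠ p := Finset.ne_of_mem_erase hq'
  have hrq : r ≠ q := Finset.ne_of_mem_erase hr'
  have hrp : r ≠ p := Finset.ne_of_mem_erase (Finset.mem_of_mem_erase hr')
  have hsr : s ≠ r := Finset.ne_of_mem_erase hs'
  have hsq : s ≠ q := Finset.ne_of_mem_erase (Finset.mem_of_mem_erase hs')
  have hsp : s ≠ p :=
    Finset.ne_of_mem_erase (Finset.mem_of_mem_erase (Finset.mem_of_mem_erase hs'))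
  obtain ⟨x, hxp, hxq, hxr, hxs⟩ := L4 p q r s (Ne.symm hqp) (Ne.symm hrp) (Ne.symm hsp)
    (Ne.symm hrq) (Ne.symm hsq) (Ne.symm hsr)
    (hCC p hp q hq (Ne.symm hqp)) (hCC p hp r hr (Ne.symm hrp))
    (hCC p hp s hs (Ne.symm hsp)) (hCC q hq r hr (Ne.symm hrq))
    (hCC q hq s hs (Ne.symm hsq)) (hCC r hr s hs (Ne.symm hsr))
  have hxall : ∀ t ∈ C, pmem x t := by
    intro t ht
    by_cases htp : t = p
    · exact htp ▸ hxp
    by_cases htq : t = q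
    · exact htq ▸ hxq
    by_cases htr : t = r
    · exact htr ▸ hxr
    obtain ⟨y, hyp, hyq, _, hyt⟩ := L4 p q r t (Ne.symm hqp) (Ne.symm hrp)
      (fun h => htp h.symm) (Ne.symm hrq) (fun h => htq h.symm) (fun h => htr h.symm)
      (hCC p hp q hq (Ne.symm hqp)) (hCC p hp r hr (Ne.symm hrp))
      (hCC p hp t ht (fun h => htp h.symm)) (hCC q hq r hr (Ne.symm hrq))
      (hCC q hq t ht (fun h => htq h.symm)) (hCC r hr t ht (fun h => htr h.symm))
    have : y = x := Luniq y x p q (Ne.symm hqp) hyp hyq hxp hxq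
    exact this ▸ hyt
  have hxU : x ∈ U := by
    rcases hxp with h | h
    · exact h ▸ (hU p hp).1
    · exact h ▸ (hU p hp).2
  have hinj : C.card ≤ (U.erase x).card := by
    apply Finset.card_le_card_of_injOn (pother x)
    · intro t ht
      have hxt := hxall t ht
      have hot := Lother x t hxt
      refine Finset.mem_erase.mpr ⟨hot.1, ?_⟩
      rcases hot.2 with h | h
      · exact h ▸ (hU t ht).1
      · exact h ▸ (hU t ht).2
    · intro t1 h1 t2 h2 heq
      exact Lother_inj x t1 t2 (hxall t1 h1) (hxall t2 h2) heq
  rwa [Finset.card_erase_of_mem hxU] at hinj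

lemma Ksmall (U : Finset (Fin 6)) (C : Finset P6)
    (hU : ∀ p ∈ C, p.1.1 ∈ U ∧ p.1.2 ∈ U) (h2 : U.card ≤ 2) : C.card ≤ 1 := by
  rw [Finset.card_le_one]
  intro p hp q hq
  have hsub : ({p.1.1, p.1.2} : Finset (Fin 6)) ⊆ U := by
    intro z hz
    rcases Finset.mem_insert.mp hz with h | h
    · exact h ▸ (hU p hp).1
    · exact (Finset.mem_singleton.mp h) ▸ (hU p hp).2
  have hcardpair : ({p.1.1, p.1.2} : Finset (Fin 6)).card = 2 :=
    Finset.card_pair (Lne p)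
  have hUeq : ({p.1.1, p.1.2} : Finset (Fin 6)) = U :=
    Finset.eq_of_subset_of_card_le hsub (by omega)
  have h1 : q.1.1 ∈ ({p.1.1, p.1.2} : Finset (Fin 6)) := hUeq ▸ (hU q hq).1
  have h2' : q.1.2 ∈ ({p.1.1, p.1.2} : Finset (Fin 6)) := hUeq ▸ (hU q hq).2
  simp only [Finset.mem_insert, Finset.mem_singleton] at h1 h2'
  exact (Lsmall p q h1 h2').symm

lemma Ksmall1 (U : Finset (Fin 6)) (C : Finset P6)
    (hU : ∀ p ∈ C, p.1.1 ∈ U ∧ p.1.2 ∈ U) (h1 : U.card ≤ 1) : C = ∅ := by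
  rcases Finset.eq_empty_or_nonempty C with h | ⟨p, hp⟩
  · exact h
  exfalso
  have hsub : ({p.1.1, p.1.2} : Finset (Fin 6)) ⊆ U := by
    intro z hz
    rcases Finset.mem_insert.mp hz with h | h
    · exact h ▸ (hU p hp).1
    · exact (Finset.mem_singleton.mp h) ▸ (hU p hp).2
  have := Finset.card_le_card hsub
  rw [Finset.card_pair (Lne p)] at this
  omega

/-- One-sided bound: indices in `X` forbidden for the pairs in `C`. -/
lemma onesided (X : Finset (Fin 6)) (C : Finset P6)
    (hXC : ∀ i ∈ X, ∀ p ∈ C, ¬ pmem i p)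
    (hCC : ∀ p ∈ C, ∀ q ∈ C, p ≠ q → inter p q) :
    X.card + C.card ≤ 6 := by
  set U : Finset (Fin 6) := Finset.univ \ X with hUdef
  have hU : ∀ p ∈ C, p.1.1 ∈ U ∧ p.1.2 ∈ U := by
    intro p hp
    constructor <;> rw [hUdef, Finset.mem_sdiff] <;>
      refine ⟨Finset.mem_univ _, fun hx => hXC _ hx p hp ?_⟩
    · exact Or.inl rfl
    · exact Or.inr rfl
  have hUcard : U.card = 6 - X.card := by
    rw [hUdef, Finset.card_sdiff_of_subset (Finset.subset_univ X), Finset.card_univ,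
      Fintype.card_fin]
  have hX6 : X.card ≤ 6 := by
    have := Finset.card_le_univ X
    simpa using this
  rcases KC U C hU hCC with h | h
  · by_cases hX3 : X.card ≤ 3
    · omega
    by_cases hX5 : X.card ≤ 5
    · have := Ksmall U C hU (by omega)
      omega
    · have hCe := Ksmall1 U C hU (by omega)
      rw [hCe, Finset.card_empty]
      omega
  · omega

end Schlafli

/-- In the Schläfli incidence structure, the maximum size of a set of pairwise
non-intersecting lines is 6: the aᵢ are pairwise disjoint, and no 7 of the 27 lines are
pairwise disjoint. -/
theorem max_disjoint_lines_is_six :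
    (∀ i j : Fin 6, ¬ meets (L27.a i) (L27.a j)) ∧
      ∀ S : Finset L27, (∀ l ∈ S, ∀ m ∈ S, l ≠ m → ¬ meets l m) → S.card ≤ 6 := by
  constructor
  · intro i j h
    exact h
  intro S hS
  classical
  set A : Finset (Fin 6) := Finset.univ.filter (fun i => L27.a i ∈ S) with hAdef
  set B : Finset (Fin 6) := Finset.univ.filter (fun i => L27.b i ∈ S) with hBdef
  set C : Finset P6 := Finset.univ.filter (fun p => L27.c p ∈ S) with hCdef
  have hmemA : ∀ i, i ∈ A ↔ L27.a i ∈ S := by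
    intro i; rw [hAdef, Finset.mem_filter]; simp
  have hmemB : ∀ i, i ∈ B ↔ L27.b i ∈ S := by
    intro i; rw [hBdef, Finset.mem_filter]; simp
  have hmemC : ∀ p, p ∈ C ↔ L27.c p ∈ S := by
    intro p; rw [hCdef, Finset.mem_filter]; simp
  -- S is covered by the three images
  have hSsub : S ⊆ (A.image L27.a ∪ B.image L27.b) ∪ C.image L27.c := by
    intro l hl
    match l with
    | L27.a i =>
      exact Finset.mem_union_left _ (Finset.mem_union_left _
        (Finset.mem_image.mpr ⟨i, (hmemA i).mpr hl, rfl⟩))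
    | L27.b i =>
      exact Finset.mem_union_left _ (Finset.mem_union_right _
        (Finset.mem_image.mpr ⟨i, (hmemB i).mpr hl, rfl⟩))
    | L27.c p =>
      exact Finset.mem_union_right _ (Finset.mem_image.mpr ⟨p, (hmemC p).mpr hl, rfl⟩)
  have hScard : S.card ≤ A.card + B.card + C.card := by
    calc S.card ≤ ((A.image L27.a ∪ B.image L27.b) ∪ C.image L27.c).card :=
          Finset.card_le_card hSsub
      _ ≤ (A.image L27.a ∪ B.image L27.b).card + (C.image L27.c).card :=
          Finset.card_union_le _ _
      _ ≤ (A.image L27.a).card + (B.image L27.b).card + (C.image L27.c).card :=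
          Nat.add_le_add_right (Finset.card_union_le _ _) _
      _ ≤ A.card + B.card + C.card := by
          have h1 := Finset.card_image_le (s := A) (f := L27.a)
          have h2 := Finset.card_image_le (s := B) (f := L27.b)
          have h3 := Finset.card_image_le (s := C) (f := L27.c)
          omega
  -- extract combinatorial hypotheses
  have hAB : ∀ i ∈ A, ∀ j ∈ B, i = j := by
    intro i hi j hj
    have h := hS _ ((hmemA i).mp hi) _ ((hmemB j).mp hj) (fun h => L27.noConfusion h)
    exact not_ne_iff.mp h
  have hAC : ∀ i ∈ A, ∀ p ∈ C, ¬ pmem i p := by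
    intro i hi p hp
    exact hS _ ((hmemA i).mp hi) _ ((hmemC p).mp hp) (fun h => L27.noConfusion h)
  have hBC : ∀ i ∈ B, ∀ p ∈ C, ¬ pmem i p := by
    intro i hi p hp
    exact hS _ ((hmemB i).mp hi) _ ((hmemC p).mp hp) (fun h => L27.noConfusion h)
  have hCC : ∀ p ∈ C, ∀ q ∈ C, p ≠ q → inter p q := by
    intro p hp q hq hne
    have h := hS _ ((hmemC p).mp hp) _ ((hmemC q).mp hq)
      (fun h => hne (by injection h))
    by_contra hcon
    push_neg at hcon
    exact h hcon
  -- case analysis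
  by_cases hA : A = ∅
  · have := onesided B C hBC hCC
    rw [hA] at hScard
    simp only [Finset.card_empty] at hScard
    omega
  by_cases hB : B = ∅
  · have := onesided A C hAC hCC
    rw [hB] at hScard
    simp only [Finset.card_empty] at hScard
    omega
  -- both nonempty: A = B = {i}
  obtain ⟨i, hi⟩ := Finset.nonempty_iff_ne_empty.mpr hA
  obtain ⟨j, hj⟩ := Finset.nonempty_iff_ne_empty.mpr hB
  have hAsub : A ⊆ {j} := fun a ha => Finset.mem_singleton.mpr (hAB a ha j hj)
  have hBsub : B ⊆ {i} := fun b hb =>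
    Finset.mem_singleton.mpr (hAB i hi b hb).symm
  have hA1 : A.card ≤ 1 := by
    have := Finset.card_le_card hAsub
    simpa using this
  have hB1 : B.card ≤ 1 := by
    have := Finset.card_le_card hBsub
    simpa using this
  -- pairs avoid i
  set U : Finset (Fin 6) := Finset.univ.erase i with hUdef
  have hU : ∀ p ∈ C, p.1.1 ∈ U ∧ p.1.2 ∈ U := by
    intro p hp
    have h := hAC i hi p hp
    constructor <;> rw [hUdef, Finset.mem_erase] <;>
      refine ⟨fun hx => h ?_, Finset.mem_univ _⟩
    · exact Or.inl hx.symm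
    · exact Or.inr hx.symm
  have hUcard : U.card = 5 := by
    rw [hUdef, Finset.card_erase_of_mem (Finset.mem_univ i), Finset.card_univ,
      Fintype.card_fin]
  have hC4 : C.card ≤ 4 := by
    rcases KC U C hU hCC with h | h <;> omega
  omega
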